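/- The family of indexed products (2ℕ)^{−qα} := Π_{j=1}^∞ (2j)^{−q·α_j} over all multi-indices α ∈ 𝒥 (sequences of nonnegative integers with finite support) is summable if and only if q > 1, i.e., Σ_{α ∈ 𝒥} (2ℕ)^{−qα} < ∞ exactly when q > 1. -/

import Mathlib

/-- Probabilists' Hermite polynomials via the Rodrigues formula
`h_n(x) = (−1)ⁿ e^{x²/2} (dⁿ/dxⁿ)(e^{−x²/2})`. -/
noncomputable def hermite (n : ℕ) (x : ℝ) : ℝ :=
  (-1)^n * Real.exp (x^2/2) * iteratedDeriv n (fun y => Real.exp (-y^2/2)) x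

lemma aux_inv_one_sub_le_exp {x : ℝ} (h0 : 0 ≤ x) (h2 : x ≤ 1/2) :
    (1 - x)⁻¹ ≤ Real.exp (2 * x) := by
  have hx : (0:ℝ) < 1 - x := by linarith
  have key : 1 ≤ (1 - x) * Real.exp (2 * x) := by
    nlinarith [Real.add_one_le_exp (2 * x)]
  calc (1 - x)⁻¹ ≤ (1 - x)⁻¹ * ((1 - x) * Real.exp (2 * x)) :=
        le_mul_of_one_le_right (by positivity) key
    _ = Real.exp (2 * x) := by field_simp

/-- Key summability lemma: if `0 ≤ r j ≤ 1/2` and `r` is summable, then the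
products `∏ j ∈ α.support, r j ^ α j` over finitely supported `α : ℕ →₀ ℕ`
are summable. -/
lemma aux_summable_prod_pow (r : ℕ → ℝ) (h0 : ∀ j, 0 ≤ r j) (h2 : ∀ j, r j ≤ 1/2)
    (hs : Summable r) :
    Summable (fun α : ℕ →₀ ℕ => ∏ j ∈ α.support, r j ^ α j) := by
  have hlt1 : ∀ j, r j < 1 := fun j => lt_of_le_of_lt (h2 j) (by norm_num)
  have hfnn : ∀ α : ℕ →₀ ℕ, 0 ≤ ∏ j ∈ α.support, r j ^ α j := fun α =>
    Finset.prod_nonneg fun j _ => pow_nonneg (h0 j) _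
  refine summable_of_sum_le (c := Real.exp (2 * ∑' j, r j)) (fun α => hfnn α) ?_
  intro u
  -- bound on the support indices
  set N : ℕ := 1 + u.sup (fun α => α.support.sup id) with hN
  -- bound on the values
  set M : ℕ := u.sup (fun α => α.support.sup α) with hM
  have hsupp : ∀ α ∈ u, ∀ j ∈ α.support, j < N := by
    intro α hα j hj
    have h1 : j ≤ α.support.sup id := Finset.le_sup (f := id) hj
    have h2' : α.support.sup id ≤ u.sup (fun α => α.support.sup id) :=
      Finset.le_sup (f := fun α => α.support.sup id) hα
    omega
  have hval : ∀ α ∈ u, ∀ j, α j ≤ M := by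
    intro α hα j
    by_cases hj : j ∈ α.support
    · exact le_trans (Finset.le_sup (f := α) hj)
        (Finset.le_sup (f := fun α => α.support.sup α) hα)
    · simp [Finsupp.notMem_support_iff.mp hj]
  -- the injection into functions `Fin N → ℕ`
  set Ψ : (ℕ →₀ ℕ) → (Fin N → ℕ) := fun α i => α i with hΨ
  set F : (Fin N → ℕ) → ℝ := fun g => ∏ i : Fin N, r i ^ g i with hF
  have hFnn : ∀ g, 0 ≤ F g := fun g => Finset.prod_nonneg fun i _ => pow_nonneg (h0 i) _
  have hfF : ∀ α ∈ u, (∏ j ∈ α.support, r j ^ α j) = F (Ψ α) := by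
    intro α hα
    have : F (Ψ α) = ∏ j ∈ Finset.range N, r j ^ α j := by
      rw [hF, Finset.prod_range fun j => r j ^ α j]
    rw [this]
    refine Finset.prod_subset ?_ ?_
    · intro j hj
      exact Finset.mem_range.mpr (hsupp α hα j hj)
    · intro j _ hj
      simp [Finsupp.notMem_support_iff.mp hj]
  have hinj : ∀ α ∈ u, ∀ β ∈ u, Ψ α = Ψ β → α = β := by
    intro α hα β hβ h
    ext j
    by_cases hj : j < N
    · exact congrFun h ⟨j, hj⟩
    · have h1 : α j = 0 := by
        by_contra hne
        exact hj (hsupp α hα j (Finsupp.mem_support_iff.mpr hne))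
      have h2' : β j = 0 := by
        by_contra hne
        exact hj (hsupp β hβ j (Finsupp.mem_support_iff.mpr hne))
      rw [h1, h2']
  have himg : u.image Ψ ⊆ Fintype.piFinset (fun _ : Fin N => Finset.range (M + 1)) := by
    intro g hg
    rcases Finset.mem_image.mp hg with ⟨α, hα, rfl⟩
    refine Fintype.mem_piFinset.mpr fun i => Finset.mem_range.mpr ?_
    exact Nat.lt_succ_of_le (hval α hα i)
  calc ∑ α ∈ u, ∏ j ∈ α.support, r j ^ α j
      = ∑ α ∈ u, F (Ψ α) := Finset.sum_congr rfl hfF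
    _ = ∑ g ∈ u.image Ψ, F g := (Finset.sum_image hinj).symm
    _ ≤ ∑ g ∈ Fintype.piFinset (fun _ : Fin N => Finset.range (M + 1)), F g :=
        Finset.sum_le_sum_of_subset_of_nonneg himg fun g _ _ => hFnn g
    _ = ∏ i : Fin N, ∑ k ∈ Finset.range (M + 1), r i ^ k :=
        (Finset.prod_univ_sum _ _).symm
    _ ≤ ∏ i : Fin N, Real.exp (2 * r i) := by
        refine Finset.prod_le_prod (fun i _ => Finset.sum_nonneg fun k _ =>
          pow_nonneg (h0 i) k) (fun i _ => ?_)
        have hsum : ∑ k ∈ Finset.range (M + 1), r i ^ k ≤ (1 - r i)⁻¹ := by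
          have := (hasSum_geometric_of_lt_one (h0 i) (hlt1 i)).tsum_eq
          rw [← this]
          exact Summable.sum_le_tsum _ (fun k _ => pow_nonneg (h0 i) k)
            (summable_geometric_of_lt_one (h0 i) (hlt1 i))
        exact hsum.trans (aux_inv_one_sub_le_exp (h0 i) (h2 i))
    _ = Real.exp (∑ i : Fin N, 2 * r i) := (Real.exp_sum _ _).symm
    _ ≤ Real.exp (2 * ∑' j, r j) := by
        apply Real.exp_le_exp.mpr
        rw [← Finset.mul_sum, Fin.sum_univ_eq_sum_range]
        refine mul_le_mul_of_nonneg_left ?_ (by norm_num)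
        exact Summable.sum_le_tsum _ (fun j _ => h0 j) hs

/-- The weights (2ℕ)^{−qα} = Π_j (2j)^{−q·α_j} over multi-indices α ∈ 𝒥
(finitely supported sequences of nonnegative integers, indexed by j = 1,2,…)
are summable if and only if q > 1. -/
theorem summable_two_nat_weights (q : ℝ) :
    Summable (fun α : ℕ →₀ ℕ =>
        ∏ j ∈ α.support, ((2 * ((j : ℝ) + 1)) ^ (-(q * (α j : ℝ))) : ℝ))
      ↔ 1 < q := by
  have hbase : ∀ j : ℕ, (0:ℝ) < 2 * ((j : ℝ) + 1) := fun j => by positivity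
  set r : ℕ → ℝ := fun j => (2 * ((j : ℝ) + 1)) ^ (-q) with hr
  have hr0 : ∀ j, 0 ≤ r j := fun j => Real.rpow_nonneg (hbase j).le _
  have hfactor : ∀ (α : ℕ →₀ ℕ) (j : ℕ),
      (2 * ((j : ℝ) + 1)) ^ (-(q * (α j : ℝ))) = r j ^ (α j) := by
    intro α j
    rw [hr, ← Real.rpow_natCast ((2 * ((j : ℝ) + 1)) ^ (-q)) (α j),
      ← Real.rpow_mul (hbase j).le]
    ring_nf
  have hprod : ∀ α : ℕ →₀ ℕ,
      (∏ j ∈ α.support, (2 * ((j : ℝ) + 1)) ^ (-(q * (α j : ℝ))))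
        = ∏ j ∈ α.support, r j ^ α j :=
    fun α => Finset.prod_congr rfl fun j _ => hfactor α j
  have hshift : Summable (fun j : ℕ => ((j : ℝ) + 1) ^ (-q)) ↔ 1 < q := by
    have : (fun j : ℕ => ((j : ℝ) + 1) ^ (-q)) = fun j : ℕ => ((j + 1 : ℕ) : ℝ) ^ (-q) := by
      funext j; push_cast; ring_nf
    rw [this, summable_nat_add_iff (f := fun n : ℕ => (n : ℝ) ^ (-q)) 1,
      Real.summable_nat_rpow]
    constructor <;> intro h <;> linarith
  have hrsum : Summable r ↔ 1 < q := by
    have heq : r = fun j : ℕ => (2:ℝ) ^ (-q) * ((j : ℝ) + 1) ^ (-q) := by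
      funext j
      show (2 * ((j : ℝ) + 1)) ^ (-q) = (2:ℝ) ^ (-q) * ((j : ℝ) + 1) ^ (-q)
      exact Real.mul_rpow (by norm_num) (by positivity)
    rw [heq]
    have h2q : (0:ℝ) < (2:ℝ) ^ (-q) := Real.rpow_pos_of_pos (by norm_num) _
    rw [summable_mul_left_iff h2q.ne']
    exact hshift
  constructor
  · intro hsum
    -- restrict to α = single j 1
    have hinj : Function.Injective (fun j : ℕ => (Finsupp.single j 1 : ℕ →₀ ℕ)) :=
      Finsupp.single_left_injective one_ne_zero
    have hsub := hsum.comp_injective hinj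
    refine hrsum.mp (hsub.congr fun j => ?_)
    show (∏ k ∈ (Finsupp.single j 1 : ℕ →₀ ℕ).support,
        (2 * ((k : ℝ) + 1)) ^ (-(q * (((Finsupp.single j 1 : ℕ →₀ ℕ)) k : ℝ)))) = r j
    rw [Finsupp.support_single_ne_zero j one_ne_zero, Finset.prod_singleton,
      Finsupp.single_eq_same, hr]
    norm_num
  · intro hq
    have hr2 : ∀ j, r j ≤ 1 / 2 := by
      intro j
      have h1 : r j ≤ (2:ℝ) ^ (-q) := by
        refine Real.rpow_le_rpow_of_nonpos (by norm_num) ?_ (by linarith)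
        have hj : (0:ℝ) ≤ (j : ℝ) := Nat.cast_nonneg j
        linarith
      have h2' : (2:ℝ) ^ (-q) ≤ (2:ℝ) ^ (-1 : ℝ) :=
        Real.rpow_le_rpow_of_exponent_le (by norm_num) (by linarith)
      have h3 : (2:ℝ) ^ (-1 : ℝ) = 1 / 2 := by
        rw [Real.rpow_neg_one]; norm_num
      exact h1.trans (h2'.trans h3.le)
    have := aux_summable_prod_pow r hr0 hr2 (hrsum.mpr hq)
    exact this.congr fun α => (hprod α).symm
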